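/- Let (Ω, 𝓕, P) be an atomless probability space and let F₁, F₂ be distribution functions of nonnegative random variables (i.e., right-continuous nondecreasing functions with F_i(x) = 0 for x < 0 and lim_{x→∞} F_i(x) = 1). Then sup{ E[XY] : X, Y measurable functions Ω → [0,∞) with P(X ≤ x) = F₁(x) and P(Y ≤ x) = F₂(x) for all x } = ∫₀¹ F₁^{−1}(u) F₂^{−1}(u) du, as an identity in [0, +∞]. -/

import Mathlib

open MeasureTheory Set Filter
open scoped Classical ENNReal

noncomputable section

variable {Ω : Type*} [MeasurableSpace Ω]

/-- Generalized inverse of a distribution function `F`: `F⁻¹(u) = inf {x : F(x) ≥ u}`. -/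
def FinvF (F : ℝ → ℝ) (t : ℝ) : ℝ := sInf {x : ℝ | t ≤ F x}

lemma half_lemma (P : Measure Ω) [IsProbabilityMeasure P]
    (hat : ∀ s : Set Ω, MeasurableSet s → 0 < P s →
      ∃ t : Set Ω, t ⊆ s ∧ MeasurableSet t ∧ 0 < P t ∧ P t < P s)
    (s : Set Ω) (hs : MeasurableSet s) (hpos : 0 < P s) :
    ∃ t : Set Ω, t ⊆ s ∧ MeasurableSet t ∧ 0 < P t ∧ P t ≤ P s / 2 := by
  obtain ⟨t, hts, htm, htpos, htlt⟩ := hat s hs hpos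
  by_cases h : P t ≤ P s / 2
  · exact ⟨t, hts, htm, htpos, h⟩
  · have hd := measure_diff (μ := P) hts htm.nullMeasurableSet (measure_ne_top P t)
    refine ⟨s \ t, diff_subset, hs.diff htm, ?_, ?_⟩
    · rw [hd]; exact tsub_pos_of_lt htlt
    · rw [hd]
      push_neg at h
      exact (tsub_le_tsub le_rfl h.le).trans
        (le_of_eq (ENNReal.sub_half (measure_ne_top P s)))

lemma small_lemma (P : Measure Ω) [IsProbabilityMeasure P]
    (hat : ∀ s : Set Ω, MeasurableSet s → 0 < P s →
      ∃ t : Set Ω, t ⊆ s ∧ MeasurableSet t ∧ 0 < P t ∧ P t < P s)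
    (s : Set Ω) (hs : MeasurableSet s) (hpos : 0 < P s) (ε : ℝ≥0∞) (hε : 0 < ε) :
    ∃ t : Set Ω, t ⊆ s ∧ MeasurableSet t ∧ 0 < P t ∧ P t ≤ ε := by
  have key : ∀ n : ℕ, ∃ t : Set Ω, t ⊆ s ∧ MeasurableSet t ∧ 0 < P t ∧ P t ≤ P s / 2 ^ n := by
    intro n
    induction n with
    | zero => exact ⟨s, subset_rfl, hs, hpos, by simp⟩
    | succ n ih =>
      obtain ⟨t, hts, htm, htpos, htle⟩ := ih
      obtain ⟨u, hut, hum, hupos, hule⟩ := half_lemma P hat t htm htpos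
      refine ⟨u, hut.trans hts, hum, hupos, hule.trans ?_⟩
      have : P s / 2 ^ n / 2 = P s / 2 ^ (n+1) := by
        rw [pow_succ, div_eq_mul_inv, div_eq_mul_inv, div_eq_mul_inv, mul_assoc,
          ENNReal.mul_inv (by simp) (by simp)]
      rw [← this]
      exact ENNReal.div_le_div htle le_rfl
  obtain ⟨n, hn⟩ := ENNReal.exists_inv_two_pow_lt hε.ne'
  obtain ⟨t, h1, h2, h3, h4⟩ := key n
  refine ⟨t, h1, h2, h3, h4.trans ?_⟩
  calc P s / 2 ^ n ≤ 1 / 2 ^ n := ENNReal.div_le_div prob_le_one le_rfl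
    _ = 2⁻¹ ^ n := by rw [one_div, ENNReal.inv_pow]
    _ ≤ ε := hn.le

/-- Sierpinski: atomless measures attain all intermediate values on subsets. -/
lemma sierpinski (P : Measure Ω) [IsProbabilityMeasure P]
    (hat : ∀ s : Set Ω, MeasurableSet s → 0 < P s →
      ∃ t : Set Ω, t ⊆ s ∧ MeasurableSet t ∧ 0 < P t ∧ P t < P s)
    (s : Set Ω) (hs : MeasurableSet s) (c : ℝ≥0∞) (hc : c ≤ P s) :
    ∃ t : Set Ω, t ⊆ s ∧ MeasurableSet t ∧ P t = c := by
  classical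
  -- the collection of admissible next steps
  set G : Set Ω → Set (Set Ω) := fun t =>
    {u : Set Ω | u ⊆ s \ t ∧ MeasurableSet u ∧ P t + P u ≤ c} with hG
  have hGne : ∀ t, (∅ : Set Ω) ∈ G t ∨ True := fun t => Or.inr trivial
  -- choose a good step
  have step : ∀ t : Set Ω, t ⊆ s → MeasurableSet t → P t ≤ c →
      ∃ u ∈ G t, ⨆ v ∈ G t, P v ≤ 2 * P u := by
    intro t hts htm htc
    set δ := ⨆ v ∈ G t, P v with hδ
    rcases eq_or_lt_of_le (zero_le : (0:ℝ≥0∞) ≤ δ) with h0 | h0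
    · refine ⟨∅, ⟨by simp, MeasurableSet.empty, by simpa using htc⟩, ?_⟩
      rw [← h0]
      exact zero_le
    · have hδtop : δ ≤ 1 := by
        refine iSup₂_le fun v hv => ?_
        exact prob_le_one
      have hhalf : δ / 2 < δ := ENNReal.half_lt_self h0.ne' (lt_of_le_of_lt hδtop (by norm_num)).ne
      obtain ⟨v, hv1⟩ := lt_iSup_iff.mp hhalf
      obtain ⟨hvG, hvlt⟩ := lt_iSup_iff.mp hv1
      refine ⟨v, hvG, ?_⟩
      show δ ≤ 2 * P v
      calc δ = 2 * (δ / 2) := by rw [ENNReal.mul_div_cancel' (by norm_num) (by norm_num)]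
        _ ≤ 2 * P v := by exact mul_le_mul_right hvlt.le 2
  -- iterate the step
  choose! u huG hu2 using step
  let seq : ℕ → Set Ω := fun n => Nat.rec (∅ : Set Ω) (fun _ t => t ∪ u t) n
  have hseq_succ : ∀ n, seq (n+1) = seq n ∪ u (seq n) := fun n => rfl
  have hinv : ∀ n, seq n ⊆ s ∧ MeasurableSet (seq n) ∧ P (seq n) ≤ c := by
    intro n
    induction n with
    | zero =>
      refine ⟨empty_subset s, MeasurableSet.empty, ?_⟩
      rw [show seq 0 = (∅ : Set Ω) from rfl, measure_empty]
      exact zero_le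
    | succ n ih =>
      obtain ⟨h1, h2, h3⟩ := ih
      obtain ⟨hu1, hu2', hu3⟩ := huG _ h1 h2 h3
      refine ⟨?_, h2.union hu2', ?_⟩
      · rw [hseq_succ]
        exact union_subset h1 (hu1.trans diff_subset)
      · rw [hseq_succ]
        exact (measure_union_le _ _).trans hu3
  have hmono : Monotone seq := by
    apply monotone_nat_of_le_succ
    intro n
    rw [hseq_succ]
    exact subset_union_left
  have hPadd : ∀ n, P (seq (n+1)) = P (seq n) + P (u (seq n)) := by
    intro n
    obtain ⟨h1, h2, h3⟩ := hinv n
    obtain ⟨hu1, hu2', hu3⟩ := huG _ h1 h2 h3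
    rw [hseq_succ]
    rw [measure_union _ hu2']
    exact disjoint_left.mpr fun x hx hxu => (hu1 hxu).2 hx
  set T := ⋃ n, seq n with hT
  have hTs : T ⊆ s := iUnion_subset fun n => (hinv n).1
  have hTm : MeasurableSet T := MeasurableSet.iUnion fun n => (hinv n).2.1
  have hTP : P T = ⨆ n, P (seq n) := hmono.directed_le.measure_iUnion
  have hTc : P T ≤ c := by
    rw [hTP]; exact iSup_le fun n => (hinv n).2.2
  refine ⟨T, hTs, hTm, ?_⟩
  by_contra hne
  have hlt : P T < c := lt_of_le_of_ne hTc hne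
  -- get a small positive piece of s \ T
  have hsT : 0 < P (s \ T) := by
    have hd := measure_diff (μ := P) hTs hTm.nullMeasurableSet (measure_ne_top P T)
    rw [hd]
    exact tsub_pos_of_lt (lt_of_lt_of_le hlt hc)
  obtain ⟨w, hw1, hw2, hw3, hw4⟩ := small_lemma P hat (s \ T) (hs.diff hTm) hsT
    (c - P T) (tsub_pos_of_lt hlt)
  -- w witnesses δ(seq n) ≥ P w for every n
  have hwG : ∀ n, w ∈ G (seq n) := by
    intro n
    refine ⟨hw1.trans (diff_subset_diff_right (subset_iUnion seq n)), hw2, ?_⟩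
    calc P (seq n) + P w ≤ P T + (c - P T) := add_le_add ((le_iSup (fun n => P (seq n)) n).trans hTP.ge) hw4
      _ = c := add_tsub_cancel_of_le hlt.le
  have hgrow : ∀ n, P w ≤ 2 * P (u (seq n)) := by
    intro n
    obtain ⟨h1, h2, h3⟩ := hinv n
    exact le_trans (le_iSup₂ (f := fun v (_ : v ∈ G (seq n)) => P v) w (hwG n)) (hu2 _ h1 h2 h3)
  -- so P (seq n) ≥ n * (P w / 2), contradiction
  have hlb : ∀ n : ℕ, (n : ℝ≥0∞) * (P w / 2) ≤ P (seq n) := by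
    intro n
    induction n with
    | zero => simp
    | succ n ih =>
      rw [hPadd n]
      push_cast
      rw [add_mul, one_mul]
      refine add_le_add ih ?_
      have := hgrow n
      calc P w / 2 ≤ 2 * P (u (seq n)) / 2 := ENNReal.div_le_div this le_rfl
        _ = P (u (seq n)) := by rw [mul_comm, mul_div_assoc, ENNReal.div_self (by norm_num) (by norm_num), mul_one]
  -- contradiction with P (seq n) ≤ c ≤ 1
  have hwpos : 0 < P w / 2 := ENNReal.div_pos hw3.ne' (by norm_num)
  have hctop : c / (P w / 2) ≠ ⊤ := by
    refine (ENNReal.div_lt_top ?_ hwpos.ne').ne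
    exact (lt_of_le_of_lt hc (measure_lt_top P s)).ne
  obtain ⟨n, hn⟩ := ENNReal.exists_nat_gt hctop
  have : (n : ℝ≥0∞) * (P w / 2) ≤ c := (hlb n).trans (hinv n).2.2
  have h2 : c / (P w / 2) < (n : ℝ≥0∞) := hn
  have h3 : c < (n : ℝ≥0∞) * (P w / 2) := by
    rw [ENNReal.div_lt_iff (Or.inl hwpos.ne') (Or.inl (by
      have : P w ≤ 1 := prob_le_one
      exact ((ENNReal.div_le_div this le_rfl).trans_lt (by norm_num)).ne))] at h2
    exact h2
  exact absurd this (not_le.mpr h3)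

lemma between_lemma (P : Measure Ω) [IsProbabilityMeasure P]
    (sier : ∀ s : Set Ω, MeasurableSet s → ∀ c : ℝ≥0∞, c ≤ P s →
      ∃ t : Set Ω, t ⊆ s ∧ MeasurableSet t ∧ P t = c)
    (t₁ t₂ : Set Ω) (h12 : t₁ ⊆ t₂) (h1 : MeasurableSet t₁) (h2 : MeasurableSet t₂)
    (c : ℝ≥0∞) (hc1 : P t₁ ≤ c) (hc2 : c ≤ P t₂) :
    ∃ t : Set Ω, t₁ ⊆ t ∧ t ⊆ t₂ ∧ MeasurableSet t ∧ P t = c := by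
  have hd := measure_diff (μ := P) h12 h1.nullMeasurableSet (measure_ne_top P t₁)
  obtain ⟨v, hv1, hv2, hv3⟩ := sier (t₂ \ t₁) (h2.diff h1) (c - P t₁) (by
    rw [hd]; exact tsub_le_tsub hc2 le_rfl)
  refine ⟨t₁ ∪ v, subset_union_left, union_subset h12 (hv1.trans diff_subset), h1.union hv2, ?_⟩
  rw [measure_union (disjoint_left.mpr fun x hx hxv => (hv1 hxv).2 hx) hv2, hv3,
    add_tsub_cancel_of_le hc1]

lemma exists_dyadic (P : Measure Ω) [IsProbabilityMeasure P]
    (sier : ∀ s : Set Ω, MeasurableSet s → ∀ c : ℝ≥0∞, c ≤ P s →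
      ∃ t : Set Ω, t ⊆ s ∧ MeasurableSet t ∧ P t = c) :
    ∃ D : ℕ → ℕ → Set Ω,
      (∀ n k, MeasurableSet (D n k)) ∧
      (∀ n k, D n k ⊆ D n (k+1)) ∧
      (∀ n k, D (n+1) (2*k) = D n k) ∧
      (∀ n k, P (D n k) = ENNReal.ofReal (min ((k : ℝ)/2^n) 1)) ∧
      (∀ n, D n 0 = ∅) ∧ (∀ n, D n (2^n) = univ) := by
  classical
  set Props : ℕ → (ℕ → Set Ω) → Prop := fun n f =>
    (∀ k, MeasurableSet (f k)) ∧ (∀ k, f k ⊆ f (k+1)) ∧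
    (∀ k, P (f k) = ENNReal.ofReal (min ((k : ℝ)/2^n) 1)) with hProps
  have step : ∀ n (f : ℕ → Set Ω), Props n f →
      ∃ f' : ℕ → Set Ω, Props (n+1) f' ∧ ∀ k, f' (2*k) = f k := by
    rintro n f ⟨hfm, hfmono, hfP⟩
    have h2n : (0:ℝ) < 2^n := by positivity
    have h2n1 : (0:ℝ) < 2^(n+1) := by positivity
    have key1 : ∀ x : ℝ, x/2^n = (2*x)/2^(n+1) := by
      intro x; rw [pow_succ]; field_simp
    have mid : ∀ k : ℕ, ∃ mm : Set Ω, f k ⊆ mm ∧ mm ⊆ f (k+1) ∧ MeasurableSet mm ∧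
        P mm = ENNReal.ofReal (min ((2*(k:ℝ)+1)/2^(n+1)) 1) := by
      intro k
      have ineq1 : P (f k) ≤ ENNReal.ofReal (min ((2*(k:ℝ)+1)/2^(n+1)) 1) := by
        rw [hfP k]
        apply ENNReal.ofReal_le_ofReal
        refine min_le_min ?_ le_rfl
        rw [key1]
        have : 2*(k:ℝ) ≤ 2*(k:ℝ)+1 := by linarith
        exact div_le_div_of_nonneg_right this h2n1.le
      have ineq2 : ENNReal.ofReal (min ((2*(k:ℝ)+1)/2^(n+1)) 1) ≤ P (f (k+1)) := by
        rw [hfP (k+1)]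
        apply ENNReal.ofReal_le_ofReal
        refine min_le_min ?_ le_rfl
        rw [key1]
        push_cast
        have : 2*(k:ℝ)+1 ≤ 2*((k:ℝ)+1) := by linarith
        exact div_le_div_of_nonneg_right this h2n1.le
      obtain ⟨mm, hm1, hm2, hm3, hm4⟩ := between_lemma P sier (f k) (f (k+1)) (hfmono k)
        (hfm k) (hfm (k+1)) (ENNReal.ofReal (min ((2*(k:ℝ)+1)/2^(n+1)) 1)) ineq1 ineq2
      exact ⟨mm, hm1, hm2, hm3, hm4⟩
    choose m hm1 hm2 hm3 hm4 using mid
    refine ⟨fun k => if k % 2 = 0 then f (k/2) else m (k/2), ⟨?_, ?_, ?_⟩, ?_⟩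
    · intro k
      by_cases h : k % 2 = 0 <;> simp [h, hfm, hm3]
    · intro k
      rcases Nat.even_or_odd k with ⟨j, hj⟩ | ⟨j, hj⟩
      · subst hj
        have e1 : (j + j) % 2 = 0 := by omega
        have e2 : (j + j) / 2 = j := by omega
        have e3 : (j + j + 1) % 2 = 1 := by omega
        have e4 : (j + j + 1) / 2 = j := by omega
        simpa [e1, e2, e3, e4] using hm1 j
      · subst hj
        have e1 : (2*j + 1) % 2 = 1 := by omega
        have e2 : (2*j + 1) / 2 = j := by omega
        have e3 : (2*j + 1 + 1) % 2 = 0 := by omega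
        have e4 : (2*j + 1 + 1) / 2 = j + 1 := by omega
        simpa [e1, e2, e3, e4] using hm2 j
    · intro k
      rcases Nat.even_or_odd k with ⟨j, hj⟩ | ⟨j, hj⟩
      · subst hj
        have e1 : (j + j) % 2 = 0 := by omega
        have e2 : (j + j) / 2 = j := by omega
        show P (if (j+j) % 2 = 0 then f ((j+j)/2) else m ((j+j)/2)) = _
        rw [if_pos e1, e2, hfP j]
        congr 2
        rw [key1]
        push_cast
        ring_nf
      · subst hj
        have e1 : (2*j + 1) % 2 = 1 := by omega
        have e2 : (2*j + 1) / 2 = j := by omega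
        show P (if (2*j+1) % 2 = 0 then f ((2*j+1)/2) else m ((2*j+1)/2)) = _
        rw [if_neg (by omega), e2, hm4 j]
        congr 2
        push_cast
        ring_nf
    · intro k
      have e1 : (2*k) % 2 = 0 := by omega
      have e2 : (2*k) / 2 = k := by omega
      simp [e1, e2]
  have base : Props 0 (fun k => if k = 0 then (∅ : Set Ω) else univ) := by
    refine ⟨fun k => ?_, fun k => ?_, fun k => ?_⟩
    · by_cases h : k = 0 <;> simp [h]
    · by_cases h : k = 0 <;> simp [h]
    · by_cases h : k = 0
      · simp [h]
      · have hk1 : (1:ℝ) ≤ (k:ℝ) := by exact_mod_cast Nat.one_le_iff_ne_zero.mpr h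
        show P (if k = 0 then (∅ : Set Ω) else univ) = _
        rw [if_neg h]
        have hmin : min ((k:ℝ)/2^0) 1 = 1 := by
          rw [min_eq_right]; simpa using hk1
        rw [hmin, measure_univ]
        simp
  choose! F hF1 hF2 using step
  set g : ℕ → ℕ → Set Ω := fun n => Nat.rec (fun k => if k = 0 then (∅ : Set Ω) else univ)
    (fun n f => F n f) n with hg
  have hgsucc : ∀ n, g (n+1) = F n (g n) := fun n => rfl
  have hgP : ∀ n, Props n (g n) := by
    intro n
    induction n with
    | zero => exact base
    | succ n ih => rw [hgsucc]; exact hF1 n (g n) ih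
  have hcompat : ∀ n k, g (n+1) (2*k) = g n k := by
    intro n k
    rw [hgsucc]
    exact hF2 n (g n) (hgP n) k
  have hzero : ∀ n, g n 0 = ∅ := by
    intro n
    induction n with
    | zero => simp [hg]
    | succ n ih => rw [show (0:ℕ) = 2*0 by ring, hcompat]; simpa using ih
  have huniv : ∀ n, g n (2^n) = univ := by
    intro n
    induction n with
    | zero => simp [hg]
    | succ n ih => rw [pow_succ, mul_comm, hcompat]; exact ih
  exact ⟨g, fun n => (hgP n).1, fun n => (hgP n).2.1, hcompat, fun n => (hgP n).2.2, hzero, huniv⟩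

lemma exists_uniform (P : Measure Ω) [IsProbabilityMeasure P]
    (D : ℕ → ℕ → Set Ω)
    (hDm : ∀ n k, MeasurableSet (D n k))
    (hDmono : ∀ n k, D n k ⊆ D n (k+1))
    (hDcompat : ∀ n k, D (n+1) (2*k) = D n k)
    (hDP : ∀ n k, P (D n k) = ENNReal.ofReal (min ((k : ℝ)/2^n) 1))
    (hDzero : ∀ n, D n 0 = ∅) (hDuniv : ∀ n, D n (2^n) = univ) :
    ∃ U : Ω → ℝ, Measurable U ∧ Measure.map U P = volume.restrict (Ioo 0 1) := by
  classical
  have hmonok : ∀ n, Monotone (D n) := fun n =>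
    monotone_nat_of_le_succ (fun k => hDmono n k)
  have hshift : ∀ n m k, D (n+m) (k * 2^m) = D n k := by
    intro n m
    induction m with
    | zero => simp
    | succ m ih =>
      intro k
      have : k * 2^(m+1) = 2 * (k * 2^m) := by ring
      rw [show n + (m+1) = (n+m)+1 by ring, this, hDcompat, ih]
  set S : Ω → Set ℝ := fun ω => {x : ℝ | ∃ p : ℕ × ℕ, ω ∈ D p.1 p.2 ∧ x = (p.2:ℝ)/2^p.1}
    with hS
  have hone : ∀ ω, (1:ℝ) ∈ S ω := by
    intro ω
    refine ⟨(0, 1), ?_, by norm_num⟩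
    have := hDuniv 0
    simp only [pow_zero] at this
    rw [this]; trivial
  have hbdd : ∀ ω, ∀ x ∈ S ω, (0:ℝ) ≤ x := by
    rintro ω x ⟨p, hp, rfl⟩
    positivity
  have hbddB : ∀ ω, BddBelow (S ω) := fun ω => ⟨0, fun x hx => hbdd ω x hx⟩
  set U : Ω → ℝ := fun ω => sInf (S ω) with hU
  have hU0 : ∀ ω, 0 ≤ U ω := fun ω => Real.sInf_nonneg (hbdd ω)
  have hU1 : ∀ ω, U ω ≤ 1 := fun ω => csInf_le (hbddB ω) (hone ω)
  -- description of strict sublevel sets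
  have hlt : ∀ y : ℝ, {ω | U ω < y} =
      ⋃ (p : ℕ × ℕ) (_ : (p.2:ℝ)/2^p.1 < y), D p.1 p.2 := by
    intro y
    ext ω
    simp only [mem_setOf_eq, mem_iUnion]
    constructor
    · intro h
      obtain ⟨x, hxS, hxy⟩ := exists_lt_of_csInf_lt ⟨1, hone ω⟩ h
      obtain ⟨p, hp, rfl⟩ := hxS
      exact ⟨p, hxy, hp⟩
    · rintro ⟨p, hpy, hp⟩
      exact lt_of_le_of_lt (csInf_le (hbddB ω) ⟨p, hp, rfl⟩) hpy
  have hltm : ∀ y : ℝ, MeasurableSet {ω | U ω < y} := by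
    intro y
    rw [hlt y]
    exact MeasurableSet.iUnion fun p => MeasurableSet.iUnion fun _ => hDm p.1 p.2
  -- measure of strict sublevel sets
  have hPUlt : ∀ y : ℝ, 0 < y → P {ω | U ω < y} = ENNReal.ofReal (min y 1) := by
    intro y hy
    set kk : ℕ → ℕ := fun n => ⌈y * 2^n⌉₊ - 1 with hkk
    have hkpos : ∀ n, 1 ≤ ⌈y * 2^n⌉₊ := by
      intro n
      rw [Nat.one_le_ceil_iff]
      positivity
    have hkcast : ∀ n, ((kk n : ℕ) : ℝ) = (⌈y * 2^n⌉₊ : ℝ) - 1 := by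
      intro n
      rw [hkk]
      push_cast [hkpos n]
      ring
    have hklt : ∀ n, ((kk n : ℕ) : ℝ) < y * 2^n := by
      intro n
      rw [hkcast]
      have h1 : (⌈y * 2^n⌉₊ : ℝ) < y * 2^n + 1 := Nat.ceil_lt_add_one (by positivity)
      linarith
    have hkge : ∀ n, y * 2^n - 1 ≤ ((kk n : ℕ) : ℝ) := by
      intro n
      rw [hkcast]
      have := Nat.le_ceil (y * 2^n)
      linarith
    have hjle : ∀ n (j : ℕ), (j:ℝ) < y * 2^n → j ≤ kk n := by
      intro n j hj
      have : j < ⌈y * 2^n⌉₊ := by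
        by_contra hc
        push_neg at hc
        have := Nat.le_ceil (y * 2^n)
        have hcast : (⌈y * 2^n⌉₊ : ℝ) ≤ (j : ℝ) := by exact_mod_cast hc
        nlinarith [Nat.le_ceil (y * 2^n)]
      show j ≤ ⌈y * 2^n⌉₊ - 1
      omega
    set B : ℕ → Set Ω := fun n => D n (kk n) with hB
    have hunion : {ω | U ω < y} = ⋃ n, B n := by
      rw [hlt y]
      apply subset_antisymm
      · refine iUnion_subset fun p => iUnion_subset fun hpy => ?_
        have h2 : (0:ℝ) < 2^p.1 := by positivity
        have : (p.2 : ℝ) < y * 2^p.1 := by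
          rw [div_lt_iff₀ h2] at hpy
          exact hpy
        exact subset_iUnion_of_subset p.1 (hmonok p.1 (hjle p.1 p.2 this))
      · refine iUnion_subset fun n => ?_
        have h2 : (0:ℝ) < 2^n := by positivity
        have hv : ((kk n : ℕ) : ℝ)/2^n < y := by
          rw [div_lt_iff₀ h2]
          exact hklt n
        exact subset_iUnion_of_subset (n, kk n) (subset_iUnion_of_subset hv subset_rfl)
    have hBmono : Monotone B := by
      intro n N hnN
      obtain ⟨m, rfl⟩ := Nat.exists_eq_add_of_le hnN
      rw [hB]
      dsimp only
      rw [← hshift n m (kk n)]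
      apply hmonok
      -- kk n * 2^m ≤ kk (n+m)
      apply hjle
      push_cast
      calc ((kk n : ℕ) : ℝ) * 2^m < (y * 2^n) * 2^m := by
            have := hklt n
            have h2 : (0:ℝ) < 2^m := by positivity
            nlinarith
        _ = y * 2^(n+m) := by rw [pow_add]; ring
    have hPB : ∀ n, P (B n) = ENNReal.ofReal (min (((kk n : ℕ):ℝ)/2^n) 1) := fun n => hDP n _
    rw [hunion, hBmono.directed_le.measure_iUnion]
    apply le_antisymm
    · refine iSup_le fun n => ?_
      rw [hPB n]
      apply ENNReal.ofReal_le_ofReal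
      refine min_le_min ?_ le_rfl
      have h2 : (0:ℝ) < 2^n := by positivity
      rw [div_le_iff₀ h2]
      nlinarith [hklt n]
    · refine ENNReal.le_of_forall_pos_le_add fun ε hε _ => ?_
      obtain ⟨n, hn⟩ := exists_pow_lt_of_lt_one (show (0:ℝ) < ε from hε) (by norm_num : (1:ℝ)/2 < 1)
      have h2 : (0:ℝ) < 2^n := by positivity
      have hpow : (1:ℝ)/2^n < ε := by
        have hhalf : ((1:ℝ)/2)^n = 1/2^n := by rw [div_pow, one_pow]
        rw [← hhalf]
        exact hn
      refine le_trans ?_ (add_le_add (le_iSup (fun n => P (B n)) n) le_rfl)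
      rw [hPB n]
      have key : min y 1 ≤ min (((kk n : ℕ):ℝ)/2^n) 1 + (ε:ℝ) := by
        have hεR : (0:ℝ) < (ε:ℝ) := by exact_mod_cast hε
        have hv : y - 1/2^n ≤ ((kk n : ℕ):ℝ)/2^n := by
          rw [le_div_iff₀ h2]
          have h3 := hkge n
          have hid : (y - 1/2^n)*2^n = y*2^n - 1 := by field_simp
          linarith
        rcases le_total y 1 with h | h
        · rw [min_eq_left h]
          rcases le_total (((kk n : ℕ):ℝ)/2^n) 1 with h' | h'
          · rw [min_eq_left h']
            linarith
          · rw [min_eq_right h']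
            linarith
        · rw [min_eq_right h]
          rcases le_total (((kk n : ℕ):ℝ)/2^n) 1 with h' | h'
          · rw [min_eq_left h']
            have : 1 - 1/2^n ≤ ((kk n : ℕ):ℝ)/2^n := by
              have : y - 1/2^n ≥ 1 - 1/2^n := by linarith
              linarith [hv]
            linarith
          · rw [min_eq_right h']
            linarith
      calc ENNReal.ofReal (min y 1) ≤ ENNReal.ofReal (min (((kk n : ℕ):ℝ)/2^n) 1 + (ε:ℝ)) :=
            ENNReal.ofReal_le_ofReal key
        _ ≤ ENNReal.ofReal (min (((kk n : ℕ):ℝ)/2^n) 1) + ENNReal.ofReal (ε:ℝ) :=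
            ENNReal.ofReal_add_le
        _ = ENNReal.ofReal (min (((kk n : ℕ):ℝ)/2^n) 1) + ε := by
            rw [ENNReal.ofReal_coe_nnreal]
  -- sublevel sets as countable intersections
  have hseteq : ∀ x : ℝ, {ω | U ω ≤ x} = ⋂ m : ℕ, {ω | U ω < x + 1/(m+1)} := by
    intro x
    ext ω
    simp only [mem_setOf_eq, mem_iInter]
    constructor
    · intro h m
      have : (0:ℝ) < 1/(m+1) := by positivity
      linarith
    · intro h
      by_contra hc
      push_neg at hc
      obtain ⟨m, hm⟩ := exists_nat_one_div_lt (show (0:ℝ) < U ω - x by linarith)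
      have := h m
      linarith
  have hUm : Measurable U := by
    apply measurable_of_Iic
    intro x
    have : U ⁻¹' Iic x = {ω | U ω ≤ x} := rfl
    rw [this, hseteq x]
    exact MeasurableSet.iInter fun m => hltm _
  -- cdf of U
  have hcdf : ∀ x : ℝ, P {ω | U ω ≤ x} =
      ENNReal.ofReal (min (max x 0) 1) := by
    intro x
    rcases lt_or_ge x 0 with hx | hx
    · have : {ω | U ω ≤ x} = ∅ := by
        ext ω
        simp only [mem_setOf_eq, mem_empty_iff_false, iff_false, not_le]
        exact lt_of_lt_of_le hx (hU0 ω)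
      rw [this, measure_empty, max_eq_right hx.le]
      simp
    · rw [max_eq_left hx]
      rw [hseteq x]
      have hanti : Antitone (fun m : ℕ => {ω | U ω < x + 1/(m+1)}) := by
        intro m m' hmm ω hω
        simp only [mem_setOf_eq] at *
        have : (1:ℝ)/(m'+1) ≤ 1/(m+1) := by
          apply div_le_div_of_nonneg_left (by norm_num) (by positivity)
          push_cast
          exact_mod_cast add_le_add (by exact_mod_cast hmm) le_rfl
        linarith
      have htend := tendsto_measure_iInter_atTop (μ := P)
        (s := fun m : ℕ => {ω | U ω < x + 1/(m+1)})
        (fun m => (hltm (x + 1/(m+1))).nullMeasurableSet) hanti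
        ⟨0, measure_ne_top P _⟩
      have heq : ∀ m : ℕ, P {ω | U ω < x + 1/(m+1)} = ENNReal.ofReal (min (x + 1/(m+1)) 1) := by
        intro m
        exact hPUlt _ (by positivity)
      have htend2 : Tendsto (fun m : ℕ => P {ω | U ω < x + 1/(m+1)}) atTop
          (nhds (ENNReal.ofReal (min x 1))) := by
        simp only [heq]
        have h1 : Tendsto (fun m : ℕ => x + 1/((m:ℝ)+1)) atTop (nhds x) := by
          have : Tendsto (fun n : ℕ => 1 / ((n : ℝ) + 1)) atTop (nhds 0) := tendsto_one_div_add_atTop_nhds_zero_nat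
          have h2 := this.const_add x
          simpa using h2
        have h3 : Tendsto (fun m : ℕ => min (x + 1/((m:ℝ)+1)) 1) atTop (nhds (min x 1)) :=
          (h1.min tendsto_const_nhds)
        exact (ENNReal.continuous_ofReal.tendsto _).comp h3
      exact tendsto_nhds_unique htend htend2
  -- the law of U
  refine ⟨U, hUm, ?_⟩
  have : IsProbabilityMeasure (Measure.map U P) := Measure.isProbabilityMeasure_map hUm.aemeasurable
  apply Measure.ext_of_Iic
  intro x
  rw [Measure.map_apply hUm measurableSet_Iic,
    Measure.restrict_apply measurableSet_Iic]
  have hpre : U ⁻¹' Iic x = {ω | U ω ≤ x} := rfl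
  rw [hpre, hcdf x]
  rcases lt_or_ge x 0 with hx | hx
  · have h1 : Iic x ∩ Ioo (0:ℝ) 1 = ∅ := by
      ext z
      simp only [mem_inter_iff, mem_Iic, mem_Ioo, mem_empty_iff_false, iff_false, not_and]
      intro hz h0
      linarith
    rw [h1, measure_empty, max_eq_right hx.le, min_eq_left (by norm_num : (0:ℝ) ≤ 1)]
    simp
  · rw [max_eq_left hx]
    rcases le_or_gt 1 x with hx1 | hx1
    · have h1 : Iic x ∩ Ioo (0:ℝ) 1 = Ioo 0 1 := by
        apply inter_eq_self_of_subset_right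
        intro z hz
        exact le_trans hz.2.le hx1
      rw [h1, min_eq_right hx1, Real.volume_Ioo]
      norm_num
    · have h1 : Iic x ∩ Ioo (0:ℝ) 1 = Ioc 0 x := by
        ext z
        simp only [mem_inter_iff, mem_Iic, mem_Ioo, mem_Ioc]
        constructor
        · rintro ⟨h1, h2, h3⟩
          exact ⟨h2, h1⟩
        · rintro ⟨h2, h1⟩
          exact ⟨h1, h2, lt_of_le_of_lt h1 hx1⟩
      rw [h1, min_eq_left hx1.le, Real.volume_Ioc]
      simp

section Finv
variable {F : ℝ → ℝ} (hmono : Monotone F)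
  (hrc : ∀ x : ℝ, ContinuousWithinAt F (Set.Ici x) x)
  (hneg : ∀ x : ℝ, x < 0 → F x = 0)
  (hlim : Tendsto F atTop (nhds 1))

include hmono hneg in
lemma F_nonneg : ∀ x, 0 ≤ F x := by
  intro x
  rcases lt_or_ge x 0 with h | h
  · exact (hneg x h).ge
  · rw [← hneg (-1) (by norm_num)]
    exact hmono (by linarith)

include hmono hneg hlim in
lemma Finv_galois {u : ℝ} (hu0 : 0 < u) (hu1 : u < 1) (hrc : ∀ x : ℝ, ContinuousWithinAt F (Set.Ici x) x) :
    ∀ x : ℝ, FinvF F u ≤ x ↔ u ≤ F x := by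
  have hne : {y : ℝ | u ≤ F y}.Nonempty := by
    obtain ⟨y, hy⟩ := (hlim.eventually (eventually_gt_nhds hu1)).exists
    exact ⟨y, hy.le⟩
  have hbdd : ∀ y ∈ {y : ℝ | u ≤ F y}, (0:ℝ) ≤ y := by
    intro y hy
    by_contra hc
    push_neg at hc
    rw [mem_setOf_eq, hneg y hc] at hy
    linarith
  have hbddB : BddBelow {y : ℝ | u ≤ F y} := ⟨0, hbdd⟩
  intro x
  constructor
  · intro h
    have hev : ∀ z, x < z → u ≤ F z := by
      intro z hz
      have : sInf {y : ℝ | u ≤ F y} < z := lt_of_le_of_lt h hz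
      obtain ⟨y, hy, hyz⟩ := exists_lt_of_csInf_lt hne this
      exact le_trans hy (hmono hyz.le)
    have htend : Tendsto F (nhdsWithin x (Ioi x)) (nhds (F x)) :=
      (hrc x).mono_left (nhdsWithin_mono x Ioi_subset_Ici_self)
    refine ge_of_tendsto htend ?_
    exact eventually_nhdsWithin_of_forall fun z hz => hev z hz
  · intro h
    exact csInf_le hbddB h

include hmono hneg in
lemma Finv_nonneg : ∀ u : ℝ, 0 ≤ FinvF F u := by
  intro u
  rcases le_or_gt u 0 with hu | hu
  · have huniv : {x : ℝ | u ≤ F x} = univ := by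
      ext x
      simp only [mem_setOf_eq, mem_univ, iff_true]
      exact hu.trans (F_nonneg hmono hneg x)
    have : ¬ BddBelow (univ : Set ℝ) := by
      rintro ⟨b, hb⟩
      have := hb (mem_univ (b-1))
      linarith
    rw [FinvF, huniv, Real.sInf_of_not_bddBelow this]
  · apply Real.sInf_nonneg
    intro x hx
    by_contra hc
    push_neg at hc
    rw [mem_setOf_eq, hneg x hc] at hx
    linarith

end Finv

lemma ofReal_eq_lint (a : ℝ) (ha : 0 ≤ a) :
    ENNReal.ofReal a = ∫⁻ s in Ioi (0:ℝ), (Iio a).indicator (1 : ℝ → ℝ≥0∞) s := by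
  rw [lintegral_indicator_one measurableSet_Iio, Measure.restrict_apply measurableSet_Iio]
  have : Iio a ∩ Ioi 0 = Ioo 0 a := by
    ext z; simp only [mem_inter_iff, mem_Iio, mem_Ioi, mem_Ioo]; tauto
  rw [this, Real.volume_Ioo, sub_zero]

lemma layer_prod {α : Type*} [MeasurableSpace α] (μ : Measure α) [IsFiniteMeasure μ]
    (X Y : α → ℝ) (hX : Measurable X) (hY : Measurable Y)
    (hX0 : ∀ ω, 0 ≤ X ω) (hY0 : ∀ ω, 0 ≤ Y ω) :
    ∫⁻ ω, ENNReal.ofReal (X ω * Y ω) ∂μ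
      = ∫⁻ s in Ioi (0:ℝ), ∫⁻ t in Ioi (0:ℝ),
          μ ({ω | s < X ω} ∩ {ω | t < Y ω}) ∂volume ∂volume := by
  have hsetA : ∀ s : ℝ, MeasurableSet {ω | s < X ω} := fun s =>
    measurableSet_lt measurable_const hX
  have hsetB : ∀ t : ℝ, MeasurableSet {ω | t < Y ω} := fun t =>
    measurableSet_lt measurable_const hY
  -- first peel off X
  have step1 : ∫⁻ ω, ENNReal.ofReal (X ω * Y ω) ∂μ
      = ∫⁻ s in Ioi (0:ℝ), ∫⁻ ω, ({ω | s < X ω}.indicator (1 : α → ℝ≥0∞) ω)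
          * ENNReal.ofReal (Y ω) ∂μ ∂volume := by
    have e1 : ∀ ω, ENNReal.ofReal (X ω * Y ω)
        = ∫⁻ s in Ioi (0:ℝ), (Iio (X ω)).indicator (1 : ℝ → ℝ≥0∞) s
            * ENNReal.ofReal (Y ω) ∂volume := by
      intro ω
      rw [lintegral_mul_const'' _ ((measurable_one.indicator measurableSet_Iio).aemeasurable),
          ← ofReal_eq_lint (X ω) (hX0 ω), ← ENNReal.ofReal_mul (hX0 ω)]
    rw [lintegral_congr e1]
    rw [lintegral_lintegral_swap ?_]
    · apply lintegral_congr
      intro s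
      apply lintegral_congr
      intro ω
      congr 1
    · -- measurability on the product
      have hset : MeasurableSet {p : α × ℝ | p.2 < X p.1} :=
        measurableSet_lt measurable_snd (hX.comp measurable_fst)
      have : (Function.uncurry fun ω s =>
          (Iio (X ω)).indicator (1 : ℝ → ℝ≥0∞) s * ENNReal.ofReal (Y ω))
          = fun p : α × ℝ => ({p : α × ℝ | p.2 < X p.1}.indicator (1 : α × ℝ → ℝ≥0∞) p)
              * ENNReal.ofReal (Y p.1) := by
        funext p
        by_cases h : p.2 < X p.1 <;>
          simp [Function.uncurry, Set.indicator_apply, h, mem_Iio]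
      rw [this]
      exact ((measurable_one.indicator hset).mul
        (ENNReal.measurable_ofReal.comp (hY.comp measurable_fst))).aemeasurable
  rw [step1]
  apply lintegral_congr
  intro s
  -- now peel off Y for fixed s
  have e2 : ∀ ω, ({ω | s < X ω}.indicator (1 : α → ℝ≥0∞) ω) * ENNReal.ofReal (Y ω)
      = ∫⁻ t in Ioi (0:ℝ), ({ω | s < X ω}.indicator (1 : α → ℝ≥0∞) ω)
          * (Iio (Y ω)).indicator (1 : ℝ → ℝ≥0∞) t ∂volume := by
    intro ω
    rw [lintegral_const_mul'' _ ((measurable_one.indicator measurableSet_Iio).aemeasurable),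
        ← ofReal_eq_lint (Y ω) (hY0 ω)]
  rw [lintegral_congr e2]
  rw [lintegral_lintegral_swap ?_]
  · apply lintegral_congr
    intro t
    have e3 : ∀ ω, ({ω | s < X ω}.indicator (1 : α → ℝ≥0∞) ω)
        * (Iio (Y ω)).indicator (1 : ℝ → ℝ≥0∞) t
        = ({ω | s < X ω} ∩ {ω | t < Y ω}).indicator (1 : α → ℝ≥0∞) ω := by
      intro ω
      by_cases h1 : s < X ω <;> by_cases h2 : t < Y ω <;>
        simp [Set.indicator_apply, h1, h2, mem_Iio]
    rw [lintegral_congr e3, lintegral_indicator_one ((hsetA s).inter (hsetB t))]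
  · have hset2 : MeasurableSet {p : α × ℝ | p.2 < Y p.1} :=
      measurableSet_lt measurable_snd (hY.comp measurable_fst)
    have : (Function.uncurry fun ω t =>
        ({ω | s < X ω}.indicator (1 : α → ℝ≥0∞) ω)
          * (Iio (Y ω)).indicator (1 : ℝ → ℝ≥0∞) t)
        = fun p : α × ℝ => (({ω | s < X ω}.indicator (1 : α → ℝ≥0∞) p.1))
            * ({p : α × ℝ | p.2 < Y p.1}.indicator (1 : α × ℝ → ℝ≥0∞) p) := by
      funext p
      by_cases h : p.2 < Y p.1 <;>
        simp [Function.uncurry, Set.indicator_apply, h, mem_Iio]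
    rw [this]
    exact (((measurable_one.indicator (hsetA s)).comp measurable_fst).mul
      (measurable_one.indicator hset2)).aemeasurable


theorem stmt10
    (P : Measure Ω) [IsProbabilityMeasure P]
    (hatomless : ∀ s : Set Ω, MeasurableSet s → 0 < P s →
      ∃ t : Set Ω, t ⊆ s ∧ MeasurableSet t ∧ 0 < P t ∧ P t < P s)
    (F₁ F₂ : ℝ → ℝ)
    (hF₁mono : Monotone F₁) (hF₂mono : Monotone F₂)
    (hF₁rc : ∀ x : ℝ, ContinuousWithinAt F₁ (Set.Ici x) x)
    (hF₂rc : ∀ x : ℝ, ContinuousWithinAt F₂ (Set.Ici x) x)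
    (hF₁neg : ∀ x : ℝ, x < 0 → F₁ x = 0)
    (hF₂neg : ∀ x : ℝ, x < 0 → F₂ x = 0)
    (hF₁lim : Tendsto F₁ atTop (nhds 1))
    (hF₂lim : Tendsto F₂ atTop (nhds 1)) :
    sSup {r : ℝ≥0∞ | ∃ X Y : Ω → ℝ, Measurable X ∧ Measurable Y ∧
        (∀ ω, 0 ≤ X ω) ∧ (∀ ω, 0 ≤ Y ω) ∧
        (∀ x : ℝ, P {ω | X ω ≤ x} = ENNReal.ofReal (F₁ x)) ∧
        (∀ x : ℝ, P {ω | Y ω ≤ x} = ENNReal.ofReal (F₂ x)) ∧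
        r = ∫⁻ ω, ENNReal.ofReal (X ω * Y ω) ∂P}
      = ∫⁻ t in Set.Ioo (0:ℝ) 1, ENNReal.ofReal (FinvF F₁ t * FinvF F₂ t) := by
  classical
  -- uniform random variable
  obtain ⟨D, hDm, hDmono, hDcompat, hDP, hDzero, hDuniv⟩ :=
    exists_dyadic P (sierpinski P hatomless)
  obtain ⟨U, hUm, hUlaw⟩ := exists_uniform P D hDm hDmono hDcompat hDP hDzero hDuniv
  set T : Set ℝ := Ioo (0:ℝ) 1 with hT
  set g₁ : ℝ → ℝ := T.indicator (FinvF F₁) with hg₁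
  set g₂ : ℝ → ℝ := T.indicator (FinvF F₂) with hg₂
  -- bounds on F
  have hF₁le1 : ∀ x, F₁ x ≤ 1 := by
    intro x
    refine ge_of_tendsto hF₁lim ?_
    filter_upwards [eventually_ge_atTop x] with y hy using hF₁mono hy
  have hF₂le1 : ∀ x, F₂ x ≤ 1 := by
    intro x
    refine ge_of_tendsto hF₂lim ?_
    filter_upwards [eventually_ge_atTop x] with y hy using hF₂mono hy
  -- elementary facts about g₁, g₂
  have hg0 : ∀ u, 0 ≤ g₁ u ∧ 0 ≤ g₂ u := by
    intro u
    constructor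
    · by_cases h : u ∈ T
      · rw [hg₁, indicator_of_mem h]; exact Finv_nonneg hF₁mono hF₁neg u
      · rw [hg₁, indicator_of_notMem h]
    · by_cases h : u ∈ T
      · rw [hg₂, indicator_of_mem h]; exact Finv_nonneg hF₂mono hF₂neg u
      · rw [hg₂, indicator_of_notMem h]
  -- sublevel sets of g (indicator version of generalized inverse)
  have hsub : ∀ (F : ℝ → ℝ), Monotone F → (∀ x : ℝ, ContinuousWithinAt F (Set.Ici x) x) →
      (∀ x : ℝ, x < 0 → F x = 0) → Tendsto F atTop (nhds 1) →
      ∀ s : ℝ, 0 ≤ s → {u : ℝ | s < T.indicator (FinvF F) u} = T ∩ Ioi (F s) := by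
    intro F hmono hrc hneg hlim s hs
    ext u
    simp only [mem_setOf_eq, mem_inter_iff, mem_Ioi]
    constructor
    · intro h
      by_cases hu : u ∈ T
      · refine ⟨hu, ?_⟩
        rw [indicator_of_mem hu] at h
        by_contra hc
        push_neg at hc
        have := (Finv_galois hmono hneg hlim hu.1 hu.2 hrc s).mpr hc
        linarith
      · rw [indicator_of_notMem hu] at h
        linarith
    · rintro ⟨hu, hF⟩
      rw [indicator_of_mem hu]
      by_contra hc
      push_neg at hc
      have := (Finv_galois hmono hneg hlim hu.1 hu.2 hrc s).mp hc
      linarith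
  have hsubneg : ∀ (F : ℝ → ℝ) (s : ℝ), (∀ u, 0 ≤ T.indicator (FinvF F) u) → s < 0 →
      {u : ℝ | s < T.indicator (FinvF F) u} = univ := by
    intro F s h0 hs
    ext u
    simp only [mem_setOf_eq, mem_univ, iff_true]
    exact lt_of_lt_of_le hs (h0 u)
  -- measurability of g₁, g₂
  have hmg : ∀ (F : ℝ → ℝ), Monotone F → (∀ x : ℝ, ContinuousWithinAt F (Set.Ici x) x) →
      (∀ x : ℝ, x < 0 → F x = 0) → Tendsto F atTop (nhds 1) →
      Measurable (T.indicator (FinvF F)) := by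
    intro F hmono hrc hneg hlim
    apply measurable_of_Iic
    intro x
    have : T.indicator (FinvF F) ⁻¹' Iic x = {u : ℝ | x < T.indicator (FinvF F) u}ᶜ := by
      ext u
      simp [not_lt]
    rw [this]
    have h0 : ∀ u, 0 ≤ T.indicator (FinvF F) u := by
      intro u
      by_cases h : u ∈ T
      · rw [indicator_of_mem h]; exact Finv_nonneg hmono hneg u
      · rw [indicator_of_notMem h]
    rcases lt_or_ge x 0 with hx | hx
    · rw [hsubneg F x h0 hx]
      simp
    · rw [hsub F hmono hrc hneg hlim x hx]
      exact ((measurableSet_Ioo.inter measurableSet_Ioi)).compl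
  have hmg₁ : Measurable g₁ := hmg F₁ hF₁mono hF₁rc hF₁neg hF₁lim
  have hmg₂ : Measurable g₂ := hmg F₂ hF₂mono hF₂rc hF₂neg hF₂lim
  set X₀ : Ω → ℝ := fun ω => g₁ (U ω) with hX₀
  set Y₀ : Ω → ℝ := fun ω => g₂ (U ω) with hY₀
  have hmX₀ : Measurable X₀ := hmg₁.comp hUm
  have hmY₀ : Measurable Y₀ := hmg₂.comp hUm
  -- marginals of X₀, Y₀
  have hmarg : ∀ (F : ℝ → ℝ), Monotone F → (∀ x : ℝ, ContinuousWithinAt F (Set.Ici x) x) →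
      (∀ x : ℝ, x < 0 → F x = 0) → Tendsto F atTop (nhds 1) → (∀ x, F x ≤ 1) →
      ∀ x : ℝ, P {ω | T.indicator (FinvF F) (U ω) ≤ x} = ENNReal.ofReal (F x) := by
    intro F hmono hrc hneg hlim hle1 x
    have hmgF : Measurable (T.indicator (FinvF F)) := hmg F hmono hrc hneg hlim
    have h0 : ∀ u, 0 ≤ T.indicator (FinvF F) u := by
      intro u
      by_cases h : u ∈ T
      · rw [indicator_of_mem h]; exact Finv_nonneg hmono hneg u
      · rw [indicator_of_notMem h]
    have hpre : {ω | T.indicator (FinvF F) (U ω) ≤ x}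
        = U ⁻¹' (T.indicator (FinvF F) ⁻¹' Iic x) := rfl
    rw [hpre, ← Measure.map_apply hUm (hmgF measurableSet_Iic), hUlaw,
      Measure.restrict_apply (hmgF measurableSet_Iic)]
    have hceq : T.indicator (FinvF F) ⁻¹' Iic x = {u : ℝ | x < T.indicator (FinvF F) u}ᶜ := by
      ext u
      simp [not_lt]
    rcases lt_or_ge x 0 with hx | hx
    · rw [hceq, hsubneg F x h0 hx]
      simp [hneg x hx]
    · rw [hceq, hsub F hmono hrc hneg hlim x hx]
      have : (T ∩ Ioi (F x))ᶜ ∩ T = T ∩ Iic (F x) := by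
        ext u
        simp only [mem_inter_iff, mem_compl_iff, mem_Ioi, mem_Iic, not_and, not_lt]
        constructor
        · rintro ⟨h1, h2⟩
          exact ⟨h2, h1 h2⟩
        · rintro ⟨h1, h2⟩
          exact ⟨fun _ => h2, h1⟩
      rw [this]
      have hF0 : 0 ≤ F x := F_nonneg hmono hneg x
      rcases lt_or_ge (F x) 1 with hFx | hFx
      · have : T ∩ Iic (F x) = Ioc 0 (F x) := by
          ext u
          rw [hT]
          simp only [mem_inter_iff, mem_Ioo, mem_Iic, mem_Ioc]
          constructor
          · rintro ⟨⟨h1, h2⟩, h3⟩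
            exact ⟨h1, h3⟩
          · rintro ⟨h1, h3⟩
            exact ⟨⟨h1, lt_of_le_of_lt h3 hFx⟩, h3⟩
        rw [this, Real.volume_Ioc]
        simp
      · have hFx1 : F x = 1 := le_antisymm (hle1 x) hFx
        have : T ∩ Iic (F x) = T := by
          apply inter_eq_self_of_subset_left
          intro u hu
          rw [hT] at hu
          rw [mem_Iic, hFx1]
          exact hu.2.le
        rw [this, hT, Real.volume_Ioo, hFx1]
        norm_num
  have hmargX₀ : ∀ x : ℝ, P {ω | X₀ ω ≤ x} = ENNReal.ofReal (F₁ x) :=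
    hmarg F₁ hF₁mono hF₁rc hF₁neg hF₁lim hF₁le1
  have hmargY₀ : ∀ x : ℝ, P {ω | Y₀ ω ≤ x} = ENNReal.ofReal (F₂ x) :=
    hmarg F₂ hF₂mono hF₂rc hF₂neg hF₂lim hF₂le1
  -- the value of E[X₀ Y₀] is the right-hand side
  have hval : ∫⁻ ω, ENNReal.ofReal (X₀ ω * Y₀ ω) ∂P
      = ∫⁻ t in Set.Ioo (0:ℝ) 1, ENNReal.ofReal (FinvF F₁ t * FinvF F₂ t) := by
    have hmf : Measurable (fun u => ENNReal.ofReal (g₁ u * g₂ u)) :=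
      ENNReal.measurable_ofReal.comp (hmg₁.mul hmg₂)
    have h1 : ∫⁻ ω, ENNReal.ofReal (X₀ ω * Y₀ ω) ∂P
        = ∫⁻ u, ENNReal.ofReal (g₁ u * g₂ u) ∂(Measure.map U P) :=
      (lintegral_map hmf hUm).symm
    rw [h1, hUlaw]
    apply setLIntegral_congr_fun measurableSet_Ioo
    intro u hu
    rw [hg₁, hg₂]; dsimp only; rw [hT, indicator_of_mem hu, indicator_of_mem hu]
  -- membership : RHS is attained
  have hmem : (∫⁻ t in Set.Ioo (0:ℝ) 1, ENNReal.ofReal (FinvF F₁ t * FinvF F₂ t)) ∈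
      {r : ℝ≥0∞ | ∃ X Y : Ω → ℝ, Measurable X ∧ Measurable Y ∧
        (∀ ω, 0 ≤ X ω) ∧ (∀ ω, 0 ≤ Y ω) ∧
        (∀ x : ℝ, P {ω | X ω ≤ x} = ENNReal.ofReal (F₁ x)) ∧
        (∀ x : ℝ, P {ω | Y ω ≤ x} = ENNReal.ofReal (F₂ x)) ∧
        r = ∫⁻ ω, ENNReal.ofReal (X ω * Y ω) ∂P} :=
    ⟨X₀, Y₀, hmX₀, hmY₀, fun ω => (hg0 (U ω)).1, fun ω => (hg0 (U ω)).2,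
      hmargX₀, hmargY₀, hval.symm⟩
  -- upper bound
  apply le_antisymm
  · apply sSup_le
    rintro r ⟨X, Y, hmX, hmY, hX0, hY0, hmargX, hmargY, rfl⟩
    rw [← hval, layer_prod P X Y hmX hmY hX0 hY0,
      layer_prod P X₀ Y₀ hmX₀ hmY₀ (fun ω => (hg0 (U ω)).1) (fun ω => (hg0 (U ω)).2)]
    -- compare the tail joint probabilities pointwise
    have htail : ∀ (Z Z' : Ω → ℝ) (F : ℝ → ℝ), Measurable Z → Measurable Z' →
        (∀ x, P {ω | Z ω ≤ x} = ENNReal.ofReal (F x)) →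
        (∀ x, P {ω | Z' ω ≤ x} = ENNReal.ofReal (F x)) →
        ∀ s : ℝ, P {ω | s < Z ω} = P {ω | s < Z' ω} := by
      intro Z Z' F hZ hZ' hmZ hmZ' s
      have hc : ∀ (W : Ω → ℝ), Measurable W → P {ω | s < W ω} = 1 - P {ω | W ω ≤ s} := by
        intro W hW
        have h1 : {ω | s < W ω} = {ω | W ω ≤ s}ᶜ := by
          ext ω; simp [not_le]
        have h2 : MeasurableSet {ω | W ω ≤ s} := hW measurableSet_Iic
        rw [h1, measure_compl h2 (measure_ne_top P _), measure_univ]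
      rw [hc Z hZ, hc Z' hZ', hmZ s, hmZ' s]
    refine lintegral_mono fun s => lintegral_mono fun t => ?_
    -- nestedness of the comonotone tail events
    have hnest : {u : ℝ | s < g₁ u} ⊆ {u : ℝ | t < g₂ u} ∨
        {u : ℝ | t < g₂ u} ⊆ {u : ℝ | s < g₁ u} := by
      rcases lt_or_ge s 0 with hs | hs
      · right
        rw [hg₁, hsubneg F₁ s (fun u => (hg0 u).1) hs]
        exact subset_univ _
      rcases lt_or_ge t 0 with ht | ht
      · left
        rw [hg₂, hsubneg F₂ t (fun u => (hg0 u).2) ht]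
        exact subset_univ _
      rw [hg₁, hg₂, hsub F₁ hF₁mono hF₁rc hF₁neg hF₁lim s hs,
        hsub F₂ hF₂mono hF₂rc hF₂neg hF₂lim t ht]
      rcases le_total (F₁ s) (F₂ t) with h | h
      · right
        exact inter_subset_inter_right _ (Ioi_subset_Ioi h)
      · left
        exact inter_subset_inter_right _ (Ioi_subset_Ioi h)
    have hXY₀ : {ω | s < X₀ ω} = U ⁻¹' {u : ℝ | s < g₁ u} := rfl
    have hYY₀ : {ω | t < Y₀ ω} = U ⁻¹' {u : ℝ | t < g₂ u} := rfl
    calc P ({ω | s < X ω} ∩ {ω | t < Y ω})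
        ≤ min (P {ω | s < X ω}) (P {ω | t < Y ω}) :=
          le_min (measure_mono inter_subset_left) (measure_mono inter_subset_right)
      _ = min (P {ω | s < X₀ ω}) (P {ω | t < Y₀ ω}) := by
          rw [htail X X₀ F₁ hmX hmX₀ hmargX hmargX₀ s, htail Y Y₀ F₂ hmY hmY₀ hmargY hmargY₀ t]
      _ = P ({ω | s < X₀ ω} ∩ {ω | t < Y₀ ω}) := by
          rcases hnest with h | h
          · have hsub' : {ω | s < X₀ ω} ⊆ {ω | t < Y₀ ω} := by
              rw [hXY₀, hYY₀]; exact preimage_mono h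
            rw [min_eq_left (measure_mono hsub'), inter_eq_left.mpr hsub']
          · have hsub' : {ω | t < Y₀ ω} ⊆ {ω | s < X₀ ω} := by
              rw [hXY₀, hYY₀]; exact preimage_mono h
            rw [min_eq_right (measure_mono hsub'), inter_eq_right.mpr hsub']
  · exact le_sSup hmem
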